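/- Let A ∈ M_{m×m}(ℂ) and B ∈ M_{n×n}(ℂ) with distinct eigenvalues λ₁,…,λ_a and μ₁,…,μ_b respectively. Then the set of eigenvalues of the operator φ_{AB}(X) = AX − XB on M_{m×n}(ℂ) is exactly {λ_i − μ_j : 1 ≤ i ≤ a, 1 ≤ j ≤ b}. -/

import Mathlib

open Polynomial Matrix Pointwise

lemma spectrum_empty_of_subsingleton {A : Type*} [Ring A] [Algebra ℂ A] [Subsingleton A]
    (a : A) : spectrum ℂ a = ∅ := by
  ext z
  simp [spectrum.mem_iff, isUnit_of_subsingleton]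

lemma intertwine_aeval {m n : ℕ} (A : Matrix (Fin m) (Fin m) ℂ) (B : Matrix (Fin n) (Fin n) ℂ)
    (Y : Matrix (Fin m) (Fin n) ℂ) (h : A * Y = Y * B) (p : ℂ[X]) :
    (aeval A p) * Y = Y * (aeval B p) := by
  induction p using Polynomial.induction_on with
  | C c =>
      simp [Algebra.algebraMap_eq_smul_one, Matrix.smul_mul, Matrix.mul_smul]
  | add p q hp hq =>
      simp [map_add, Matrix.add_mul, Matrix.mul_add, hp, hq]
  | monomial k c hk =>
      have : (aeval A (C c * X ^ (k+1))) * Y = (aeval A (C c * X ^ k)) * (A * Y) := by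
        simp only [_root_.map_mul, map_pow, pow_succ, aeval_X, Matrix.mul_assoc]
      rw [this, h, ← Matrix.mul_assoc, hk, Matrix.mul_assoc]
      simp only [_root_.map_mul, map_pow, pow_succ, aeval_X, Matrix.mul_assoc]

lemma root_charpoly_mem_spectrum {n : ℕ} (B : Matrix (Fin n) (Fin n) ℂ) (t : ℂ)
    (ht : (Matrix.charpoly B).IsRoot t) : t ∈ spectrum ℂ B := by
  rw [spectrum.mem_iff]
  rw [Matrix.isUnit_iff_isUnit_det]
  rw [isUnit_iff_ne_zero, not_not]
  have : (Matrix.charpoly B).eval t = ((algebraMap ℂ (Matrix (Fin n) (Fin n) ℂ)) t - B).det := by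
    rw [Matrix.charpoly, eval_det, matPolyEquiv_charmatrix]
    simp [Matrix.scalar, algebraMap, Algebra.algebraMap]
  rw [← this]
  exact ht

lemma spectrum_transpose {n : ℕ} (B : Matrix (Fin n) (Fin n) ℂ) :
    spectrum ℂ Bᵀ = spectrum ℂ B := by
  ext t
  simp only [spectrum.mem_iff, Matrix.isUnit_iff_isUnit_det]
  have : ((algebraMap ℂ (Matrix (Fin n) (Fin n) ℂ)) t - Bᵀ) = ((algebraMap ℂ _) t - B)ᵀ := by
    rw [Matrix.transpose_sub]
    congr 1
    simp [Algebra.algebraMap_eq_smul_one, Matrix.transpose_smul]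
  rw [this, Matrix.det_transpose]

lemma exists_eigenvector {n : ℕ} (B : Matrix (Fin n) (Fin n) ℂ) (t : ℂ)
    (ht : t ∈ spectrum ℂ B) : ∃ v : Fin n → ℂ, v ≠ 0 ∧ B.mulVec v = t • v := by
  rw [← AlgEquiv.spectrum_eq (Matrix.toLinAlgEquiv' (R := ℂ) (n := Fin n)) B] at ht
  rw [← Module.End.hasEigenvalue_iff_mem_spectrum] at ht
  obtain ⟨v, hv⟩ := ht.exists_hasEigenvector
  refine ⟨v, hv.2, ?_⟩
  have := hv.apply_eq_smul
  simpa [Matrix.toLinAlgEquiv'_apply] using this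

/-- The Sylvester operator `X ↦ A X - X B`. -/
noncomputable def sylvOp {I J : Type} [Fintype I] [Fintype J]
    (A : Matrix I I ℂ) (B : Matrix J J ℂ) :
    Module.End ℂ (Matrix I J ℂ) where
  toFun X := A * X - X * B
  map_add' X Y := by
    simp only [Matrix.mul_add, Matrix.add_mul]
    abel
  map_smul' c X := by
    simp only [Matrix.mul_smul, Matrix.smul_mul, smul_sub, RingHom.id_apply]


theorem stmt12 (m n a b : ℕ)
    (A : Matrix (Fin m) (Fin m) ℂ) (B : Matrix (Fin n) (Fin n) ℂ)
    (lam : Fin a → ℂ) (mu : Fin b → ℂ)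
    (hlinj : Function.Injective lam) (hlspec : spectrum ℂ A = Set.range lam)
    (hminj : Function.Injective mu) (hmspec : spectrum ℂ B = Set.range mu) :
    spectrum ℂ (sylvOp A B) = {z : ℂ | ∃ i j, z = lam i - mu j} := by
  rcases Nat.eq_zero_or_pos m with hm | hm
  · subst hm
    haveI : Subsingleton (Matrix (Fin 0) (Fin n) ℂ) :=
      Subsingleton.intro fun X Y => Matrix.ext fun i _ => i.elim0
    haveI : Subsingleton (Module.End ℂ (Matrix (Fin 0) (Fin n) ℂ)) :=
      Subsingleton.intro fun f g => LinearMap.ext fun x => Subsingleton.elim _ _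
    haveI : Subsingleton (Matrix (Fin 0) (Fin 0) ℂ) :=
      Subsingleton.intro fun X Y => Matrix.ext fun i _ => i.elim0
    rw [spectrum_empty_of_subsingleton A] at hlspec
    rw [spectrum_empty_of_subsingleton (sylvOp A B)]
    ext z
    simp only [Set.mem_empty_iff_false, Set.mem_setOf_eq, false_iff]
    rintro ⟨i, j, rfl⟩
    have : lam i ∈ Set.range lam := ⟨i, rfl⟩
    rw [← hlspec] at this
    exact this
  rcases Nat.eq_zero_or_pos n with hn | hn
  · subst hn
    haveI : Subsingleton (Matrix (Fin m) (Fin 0) ℂ) :=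
      Subsingleton.intro fun X Y => Matrix.ext fun _ j => j.elim0
    haveI : Subsingleton (Module.End ℂ (Matrix (Fin m) (Fin 0) ℂ)) :=
      Subsingleton.intro fun f g => LinearMap.ext fun x => Subsingleton.elim _ _
    haveI : Subsingleton (Matrix (Fin 0) (Fin 0) ℂ) :=
      Subsingleton.intro fun X Y => Matrix.ext fun i _ => i.elim0
    rw [spectrum_empty_of_subsingleton B] at hmspec
    rw [spectrum_empty_of_subsingleton (sylvOp A B)]
    ext z
    simp only [Set.mem_empty_iff_false, Set.mem_setOf_eq, false_iff]
    rintro ⟨i, j, rfl⟩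
    have : mu j ∈ Set.range mu := ⟨j, rfl⟩
    rw [← hmspec] at this
    exact this
  haveI : Nonempty (Fin m) := Fin.pos_iff_nonempty.mp hm
  haveI : Nonempty (Fin n) := Fin.pos_iff_nonempty.mp hn
  ext z
  simp only [Set.mem_setOf_eq]
  constructor
  · intro hz
    have heig : Module.End.HasEigenvalue (sylvOp A B) z :=
      Module.End.hasEigenvalue_iff_mem_spectrum.mpr hz
    obtain ⟨Y, hY⟩ := heig.exists_hasEigenvector
    have hY0 : Y ≠ 0 := hY.2
    have hYeq : A * Y - Y * B = z • Y := hY.apply_eq_smul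
    set A' := A - algebraMap ℂ (Matrix (Fin m) (Fin m) ℂ) z with hA'
    have hAY : A' * Y = Y * B := by
      have h1 : A * Y = z • Y + Y * B := sub_eq_iff_eq_add.mp hYeq
      rw [hA', Matrix.sub_mul, Algebra.algebraMap_eq_smul_one, Matrix.smul_mul, Matrix.one_mul,
        h1, add_sub_cancel_left]
    have hcay : (aeval A' (Matrix.charpoly B)) * Y = 0 := by
      rw [intertwine_aeval A' B Y hAY, Matrix.aeval_self_charpoly, Matrix.mul_zero]
    have hnotunit : ¬ IsUnit (aeval A' (Matrix.charpoly B)) := by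
      intro hu
      obtain ⟨u, hu⟩ := hu
      apply hY0
      calc Y = 1 * Y := (Matrix.one_mul Y).symm
        _ = ((↑u⁻¹ : Matrix (Fin m) (Fin m) ℂ) * ↑u) * Y := by rw [Units.inv_mul]
        _ = (↑u⁻¹ : Matrix (Fin m) (Fin m) ℂ) * ((↑u : Matrix (Fin m) (Fin m) ℂ) * Y) := Matrix.mul_assoc _ _ _
        _ = (↑u⁻¹ : Matrix (Fin m) (Fin m) ℂ) * (0 : Matrix (Fin m) (Fin n) ℂ) := by rw [hu, hcay]
        _ = 0 := Matrix.mul_zero _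
    have h0 : (0 : ℂ) ∈ spectrum ℂ (aeval A' (Matrix.charpoly B)) :=
      (spectrum.zero_mem_iff ℂ).mpr hnotunit
    have hne : (spectrum ℂ A').Nonempty :=
      spectrum.nonempty_of_isAlgClosed_of_finiteDimensional ℂ A'
    rw [spectrum.map_polynomial_aeval_of_nonempty A' _ hne] at h0
    obtain ⟨t, ht, ht0⟩ := h0
    have htB : t ∈ spectrum ℂ B := root_charpoly_mem_spectrum B t ht0
    have htA : t ∈ spectrum ℂ A - ({z} : Set ℂ) := by
      rw [spectrum.sub_singleton_eq]; exact ht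
    rw [Set.mem_sub] at htA
    obtain ⟨x, hx, y, hy, hxy⟩ := htA
    rw [Set.mem_singleton_iff] at hy
    subst hy
    rw [hlspec] at hx
    obtain ⟨i, rfl⟩ := hx
    rw [hmspec] at htB
    obtain ⟨j, hj⟩ := htB
    exact ⟨i, j, by rw [hj, ← hxy]; ring⟩
  · rintro ⟨i, j, rfl⟩
    have hli : lam i ∈ spectrum ℂ A := by rw [hlspec]; exact ⟨i, rfl⟩
    have hmj : mu j ∈ spectrum ℂ Bᵀ := by rw [spectrum_transpose, hmspec]; exact ⟨j, rfl⟩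
    obtain ⟨v, hv0, hv⟩ := exists_eigenvector A _ hli
    obtain ⟨w, hw0, hw⟩ := exists_eigenvector Bᵀ _ hmj
    set Y := Matrix.vecMulVec v w with hYdef
    have hYn : Y ≠ 0 := by
      obtain ⟨p, hp⟩ := Function.ne_iff.mp hv0
      obtain ⟨q, hq⟩ := Function.ne_iff.mp hw0
      intro h
      have := congrFun (congrFun h p) q
      simp only [hYdef, Matrix.vecMulVec_apply, Matrix.zero_apply] at this
      rcases mul_eq_zero.mp this with h' | h'
      · exact hp (by simpa using h')
      · exact hq (by simpa using h')
    have hYeq : (sylvOp A B) Y = (lam i - mu j) • Y := by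
      show A * Y - Y * B = (lam i - mu j) • Y
      ext p q
      have hvp : ∑ r, A p r * v r = lam i * v p := by
        have := congrFun hv p
        simpa [Matrix.mulVec, dotProduct] using this
      have hwq : ∑ r, B r q * w r = mu j * w q := by
        have := congrFun hw q
        simpa [Matrix.mulVec, dotProduct, Matrix.transpose_apply] using this
      have e1 : (A * Y) p q = (lam i * v p) * w q := by
        rw [Matrix.mul_apply]
        simp only [hYdef, Matrix.vecMulVec_apply]
        rw [← hvp, Finset.sum_mul]
        exact Finset.sum_congr rfl fun r _ => by ring
      have e2 : (Y * B) p q = v p * (mu j * w q) := by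
        rw [Matrix.mul_apply]
        simp only [hYdef, Matrix.vecMulVec_apply]
        rw [← hwq, Finset.mul_sum]
        exact Finset.sum_congr rfl fun r _ => by ring
      rw [Matrix.sub_apply, e1, e2]
      simp only [Matrix.sub_apply, Matrix.smul_apply, smul_eq_mul, e1, e2, hYdef,
        Matrix.vecMulVec_apply]
      ring
    exact Module.End.HasEigenvalue.mem_spectrum
      (Module.End.hasEigenvalue_of_hasEigenvector
        ⟨Module.End.mem_eigenspace_iff.mpr hYeq, hYn⟩)
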